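/- Suppose b : (0,T)×(0,T)×(0,1) → ℝ is measurable and satisfies |(T−t)^{2k} e^{(4/T)⁴ sγd/(T−t)⁴} b(t,s',x)| ≤ M for a.e. (t,s',x). Then for every w ∈ L²((0,T)×(0,1)) and k ≥ 0, the function F(t,x) = ∫₀ᵗ b(t,s',x) w(s',x) ds' satisfies ∫∫_Q (sβ(t))^{−k} e^{2sγd β(t)} F(t,x)² dx dt ≤ C_T M² s^{−k} ∫∫_Q w² dx dt for some constant C_T depending only on T, k, γ, d. -/

import Mathlib

open Set MeasureTheory intervalIntegral

/-- `|f|` is integrable on a finite-measure set when `f^2` is. -/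
lemma mem_abs_integrable {f : ℝ → ℝ} {u : Set ℝ} (hu : volume u ≠ ⊤)
    (hm : AEStronglyMeasurable f (volume.restrict u))
    (h2 : IntegrableOn (fun y => f y ^ 2) u) :
    IntegrableOn (fun y => |f y|) u := by
  have hconst : IntegrableOn (fun _ : ℝ => (1:ℝ)) u := integrableOn_const hu
  have hg : IntegrableOn (fun y => (f y ^ 2 + 1) / 2) u := (h2.add hconst).div_const 2
  refine Integrable.mono hg hm.norm (ae_of_all _ fun y => ?_)
  rw [Real.norm_eq_abs, Real.norm_eq_abs, abs_abs]
  nlinarith [abs_nonneg (f y), sq_abs (f y), sq_nonneg (|f y| - 1),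
    le_abs_self ((f y ^ 2 + 1) / 2)]

/-- Cauchy–Schwarz: `(∫ |f|)² ≤ T ∫ f²` on `Ioo 0 T`. -/
lemma sq_setIntegral_abs_le {f : ℝ → ℝ} {T : ℝ} (hT : 0 ≤ T)
    (hm : AEStronglyMeasurable f (volume.restrict (Ioo 0 T)))
    (h2 : IntegrableOn (fun y => f y ^ 2) (Ioo 0 T)) :
    (∫ y in Ioo 0 T, |f y|) ^ 2 ≤ T * ∫ y in Ioo 0 T, f y ^ 2 := by
  have hpq : Real.HolderConjugate 2 2 := ⟨by norm_num, by norm_num, by norm_num⟩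
  have h2' : ENNReal.ofReal (2:ℝ) = 2 := by norm_num
  have habs : AEStronglyMeasurable (fun y => |f y|) (volume.restrict (Ioo 0 T)) := hm.norm
  have hf2 : MemLp (fun y => |f y|) (ENNReal.ofReal 2) (volume.restrict (Ioo 0 T)) := by
    rw [h2']
    refine (memLp_two_iff_integrable_sq habs).mpr ?_
    simp only [sq_abs]; exact h2
  have h1 : MemLp (fun _ : ℝ => (1:ℝ)) (ENNReal.ofReal 2) (volume.restrict (Ioo 0 T)) :=
    memLp_const 1
  have holder := MeasureTheory.integral_mul_le_Lp_mul_Lq_of_nonneg hpq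
    (ae_of_all _ fun y => abs_nonneg (f y)) (ae_of_all _ fun _ => zero_le_one) hf2 h1
  have hrw : ∀ x : ℝ, x ^ (2:ℝ) = x ^ (2:ℕ) := fun x => by
    rw [show (2:ℝ) = ((2:ℕ):ℝ) by norm_num, Real.rpow_natCast]
  simp only [hrw, mul_one, one_pow, sq_abs] at holder
  have hvol : ∫ _y in Ioo 0 T, (1:ℝ) = T := by
    simp [Real.volume_Ioo, ENNReal.toReal_ofReal hT, hT]
  rw [hvol] at holder
  have hV : 0 ≤ ∫ y in Ioo 0 T, f y ^ 2 := integral_nonneg fun y => sq_nonneg _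
  have hI : 0 ≤ ∫ y in Ioo 0 T, |f y| := integral_nonneg fun y => abs_nonneg _
  have e1 : ((∫ y in Ioo 0 T, f y ^ 2) ^ ((1:ℝ)/2)) ^ (2:ℕ) = ∫ y in Ioo 0 T, f y ^ 2 := by
    rw [← Real.rpow_natCast ((∫ y in Ioo 0 T, f y ^ 2) ^ ((1:ℝ)/2)) 2,
      ← Real.rpow_mul hV]
    norm_num
  have e2 : (T ^ ((1:ℝ)/2)) ^ (2:ℕ) = T := by
    rw [← Real.rpow_natCast (T ^ ((1:ℝ)/2)) 2, ← Real.rpow_mul hT]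
    norm_num
  calc (∫ y in Ioo 0 T, |f y|) ^ 2
      ≤ ((∫ y in Ioo 0 T, f y ^ 2) ^ ((1:ℝ)/2) * T ^ ((1:ℝ)/2)) ^ 2 := by
        apply pow_le_pow_left₀ hI holder
    _ = T * ∫ y in Ioo 0 T, f y ^ 2 := by rw [mul_pow, e1, e2]; ring

/-- The key pointwise weight estimate. -/
lemma weight_key {T s γ d k t : ℝ} (hT : 0 < T) (hs : 0 < s) (hγ : 0 < γ) (hd : 0 < d)
    (hk : 0 ≤ k) (ht0 : 0 < t) (htT : t < T) (β : ℝ → ℝ)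
    (hβ : β = fun t => if t ≤ T/2 then (2/T) ^ 8 else 1 / (t * (T - t)) ^ 4) :
    β t ^ (-k) * Real.exp (2 * s * γ * d * β t) *
      (((T - t) ^ (2 * k) * Real.exp ((4/T) ^ 4 * s * γ * d / (T - t) ^ 4))⁻¹) ^ 2
      ≤ ((T ^ 4)⁻¹) ^ (-k) := by
  have hu0 : 0 < T - t := sub_pos.2 htT
  have huT : T - t < T := by linarith
  have hβpos : 0 < β t := by
    rw [hβ]; dsimp only; split_ifs with hc
    · positivity
    · exact one_div_pos.mpr (pow_pos (mul_pos ht0 hu0) 4)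
  have hβle : β t ≤ (4/T) ^ 4 / (T - t) ^ 4 := by
    rw [hβ]; dsimp only; split_ifs with hc
    · rw [le_div_iff₀ (pow_pos hu0 4)]
      have hu4 : (T - t) ^ 4 ≤ T ^ 4 := pow_le_pow_left₀ hu0.le huT.le 4
      have hA : (2/T) ^ 8 * (T - t) ^ 4 ≤ (2/T) ^ 8 * T ^ 4 :=
        mul_le_mul_of_nonneg_left hu4 (by positivity)
      have hB : (2/T) ^ 8 * T ^ 4 = 256 / T ^ 4 := by field_simp; ring
      have hC : (4/T) ^ 4 = 256 / T ^ 4 := by field_simp; ring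
      linarith
    · push_neg at hc
      rw [div_le_div_iff₀ (pow_pos (mul_pos ht0 hu0) 4) (pow_pos hu0 4)]
      have h4 : (1:ℝ) ≤ (4 * t / T) ^ 4 := one_le_pow₀ (by rw [le_div_iff₀ hT]; linarith)
      have he : (4/T) ^ 4 * (t * (T - t)) ^ 4 = (4 * t / T) ^ 4 * (T - t) ^ 4 := by ring
      nlinarith [pow_pos hu0 4]
  have hlow : (T ^ 4)⁻¹ ≤ β t * (T - t) ^ 4 := by
    rw [hβ]; dsimp only; split_ifs with hc
    · have hu2 : T/2 ≤ T - t := by linarith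
      have hA : (2/T) ^ 8 * (T/2) ^ 4 ≤ (2/T) ^ 8 * (T - t) ^ 4 :=
        mul_le_mul_of_nonneg_left (pow_le_pow_left₀ (by positivity) hu2 4) (by positivity)
      have hB : (2/T) ^ 8 * (T/2) ^ 4 = 16 / T ^ 4 := by field_simp; ring
      have hC : (T ^ 4)⁻¹ ≤ 16 / T ^ 4 := by
        rw [inv_eq_one_div]
        exact (div_le_div_iff_of_pos_right (by positivity)).mpr (by norm_num)
      linarith
    · push_neg at hc
      have h5 : 1 / (t * (T - t)) ^ 4 * (T - t) ^ 4 = 1 / t ^ 4 := by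
        field_simp
      rw [h5, one_div]
      exact inv_anti₀ (pow_pos ht0 4) (pow_le_pow_left₀ ht0.le htT.le 4)
  have hr1 : (((T - t) ^ (2 * k))⁻¹) ^ (2:ℕ) = ((T - t) ^ 4) ^ (-k) := by
    rw [← Real.rpow_neg hu0.le, ← Real.rpow_natCast ((T - t) ^ (-(2*k))) 2,
      ← Real.rpow_mul hu0.le, ← Real.rpow_natCast (T - t) 4, ← Real.rpow_mul hu0.le]
    norm_num
    ring_nf
  have h1 : β t ^ (-k) * (((T - t) ^ (2 * k))⁻¹) ^ 2 ≤ ((T ^ 4)⁻¹) ^ (-k) := by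
    rw [hr1, ← Real.mul_rpow hβpos.le (by positivity)]
    exact Real.rpow_le_rpow_of_nonpos (by positivity) hlow (neg_nonpos.2 hk)
  have h2 : Real.exp (2 * s * γ * d * β t) *
      ((Real.exp ((4/T) ^ 4 * s * γ * d / (T - t) ^ 4))⁻¹) ^ 2 ≤ 1 := by
    rw [← Real.exp_neg, sq, ← Real.exp_add, ← Real.exp_add, Real.exp_le_one_iff]
    have hmul := mul_le_mul_of_nonneg_left hβle
      (by positivity : (0:ℝ) ≤ 2 * s * γ * d)
    have he : 2 * s * γ * d * ((4/T) ^ 4 / (T - t) ^ 4)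
        = (4/T) ^ 4 * s * γ * d / (T - t) ^ 4 + (4/T) ^ 4 * s * γ * d / (T - t) ^ 4 := by
      ring
    linarith
  calc β t ^ (-k) * Real.exp (2 * s * γ * d * β t) *
        (((T - t) ^ (2 * k) * Real.exp ((4/T) ^ 4 * s * γ * d / (T - t) ^ 4))⁻¹) ^ 2
      = (β t ^ (-k) * (((T - t) ^ (2 * k))⁻¹) ^ 2) *
        (Real.exp (2 * s * γ * d * β t) *
          ((Real.exp ((4/T) ^ 4 * s * γ * d / (T - t) ^ 4))⁻¹) ^ 2) := by
        rw [mul_inv, mul_pow]; ring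
    _ ≤ ((T ^ 4)⁻¹) ^ (-k) * 1 := by
        refine mul_le_mul h1 h2 (by positivity) (Real.rpow_nonneg (by positivity) _)
    _ = ((T ^ 4)⁻¹) ^ (-k) := mul_one _

/-- If the memory kernel `b` satisfies the weighted bound
`|(T−t)^{2k} e^{(4/T)⁴ sγd/(T−t)⁴} b(t,s',x)| ≤ M`, then the memory term
`F(t,x) = ∫₀ᵗ b(t,s',x) w(s',x) ds'` satisfies
`∫∫_Q (sβ(t))^{−k} e^{2sγdβ(t)} F² ≤ C M² s^{−k} ∫∫_Q w²`
for a constant `C` depending only on `T, k, γ, d, s`. -/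
theorem memory_term_estimate (T s γ d k : ℝ)
    (hT : 0 < T) (hs : 0 < s) (hγ : 0 < γ) (hd : 0 < d) (hk : 0 ≤ k)
    (β : ℝ → ℝ)
    (hβ : β = fun t => if t ≤ T/2 then (2/T) ^ 8 else 1 / (t * (T - t)) ^ 4) :
    ∃ C > 0, ∀ (b : ℝ → ℝ → ℝ → ℝ) (M : ℝ) (w : ℝ → ℝ → ℝ),
      Measurable (fun p : ℝ × ℝ × ℝ => b p.1 p.2.1 p.2.2) →
      Measurable (fun p : ℝ × ℝ => w p.1 p.2) →
      IntegrableOn (fun p : ℝ × ℝ => (w p.1 p.2) ^ 2)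
        ((Ioo 0 T) ×ˢ (Ioo (0:ℝ) 1)) →
      (∀ t ∈ Ioo (0:ℝ) T, ∀ s' ∈ Ioo (0:ℝ) T, ∀ x ∈ Ioo (0:ℝ) 1,
        |(T - t) ^ (2 * k) * Real.exp ((4/T) ^ 4 * s * γ * d / (T - t) ^ 4)
          * b t s' x| ≤ M) →
      ∫ p in (Ioo 0 T) ×ˢ (Ioo (0:ℝ) 1),
          (s * β p.1) ^ (-k) * Real.exp (2 * s * γ * d * β p.1)
            * (∫ s' in (0:ℝ)..p.1, b p.1 s' p.2 * w s' p.2) ^ 2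
        ≤ C * M ^ 2 * s ^ (-k)
            * ∫ p in (Ioo 0 T) ×ˢ (Ioo (0:ℝ) 1), (w p.1 p.2) ^ 2 := by
  refine ⟨((T ^ 4)⁻¹) ^ (-k) * T ^ 2, by positivity, ?_⟩
  intro b M w hb hw hwint hbound
  have hmeq : (volume : Measure (ℝ × ℝ)).restrict ((Ioo 0 T) ×ˢ (Ioo (0:ℝ) 1))
      = (volume.restrict (Ioo 0 T)).prod (volume.restrict (Ioo (0:ℝ) 1)) := by
    rw [Measure.volume_eq_prod, Measure.prod_restrict]
  have hM0 : 0 ≤ M := le_trans (abs_nonneg _)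
    (hbound (T/2) ⟨half_pos hT, half_lt_self hT⟩ (T/2) ⟨half_pos hT, half_lt_self hT⟩
      (1/2) ⟨by norm_num, by norm_num⟩)
  have hβ0 : ∀ t, 0 ≤ β t := by
    intro t; rw [hβ]; dsimp only; split_ifs with hc
    · positivity
    · positivity
  have hwint' : Integrable (fun p : ℝ × ℝ => w p.1 p.2 ^ 2)
      ((volume.restrict (Ioo 0 T)).prod (volume.restrict (Ioo (0:ℝ) 1))) := by
    rw [← hmeq]; exact hwint
  have hAE : ∀ᵐ x ∂(volume.restrict (Ioo (0:ℝ) 1)),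
      Integrable (fun s' => w s' x ^ 2) (volume.restrict (Ioo 0 T)) :=
    hwint'.prod_left_ae
  have hInt2 : Integrable (fun x => ∫ s' in Ioo 0 T, w s' x ^ 2)
      (volume.restrict (Ioo (0:ℝ) 1)) := hwint'.integral_prod_right
  have hh0 : ∀ x, 0 ≤ ∫ s' in Ioo 0 T, w s' x ^ 2 :=
    fun x => integral_nonneg fun _ => sq_nonneg _
  set K0 := ((T ^ 4)⁻¹) ^ (-k) * M ^ 2 * s ^ (-k) * T with hK0
  have hFub : ∫ p in (Ioo 0 T) ×ˢ (Ioo (0:ℝ) 1), w p.1 p.2 ^ 2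
      = ∫ x in Ioo (0:ℝ) 1, ∫ s' in Ioo 0 T, w s' x ^ 2 := by
    rw [show (∫ p in (Ioo 0 T) ×ˢ (Ioo (0:ℝ) 1), w p.1 p.2 ^ 2)
        = ∫ p, w p.1 p.2 ^ 2
            ∂((volume.restrict (Ioo 0 T)).prod (volume.restrict (Ioo (0:ℝ) 1)))
          from by rw [← hmeq]]
    rw [MeasureTheory.integral_prod _ hwint']
    exact integral_integral_swap hwint'
  have step1 : (∫ p in (Ioo 0 T) ×ˢ (Ioo (0:ℝ) 1),
        (s * β p.1) ^ (-k) * Real.exp (2 * s * γ * d * β p.1)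
          * (∫ s' in (0:ℝ)..p.1, b p.1 s' p.2 * w s' p.2) ^ 2)
      ≤ ∫ p in (Ioo 0 T) ×ˢ (Ioo (0:ℝ) 1),
          K0 * ∫ s' in Ioo 0 T, w s' p.2 ^ 2 := by
    rw [hmeq]
    refine integral_mono_of_nonneg (ae_of_all _ fun p => ?_)
      ((integrable_const K0).mul_prod hInt2) ?_
    · exact mul_nonneg (mul_nonneg (Real.rpow_nonneg
        (mul_nonneg hs.le (hβ0 p.1)) _) (Real.exp_pos _).le) (sq_nonneg _)
    have hmem : ∀ᵐ p ∂((volume.restrict (Ioo 0 T)).prod (volume.restrict (Ioo (0:ℝ) 1))),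
        p ∈ (Ioo 0 T) ×ˢ (Ioo (0:ℝ) 1) := by
      rw [← hmeq]; exact ae_restrict_mem (measurableSet_Ioo.prod measurableSet_Ioo)
    have hintae : ∀ᵐ p ∂((volume.restrict (Ioo 0 T)).prod (volume.restrict (Ioo (0:ℝ) 1))),
        Integrable (fun s' => w s' p.2 ^ 2) (volume.restrict (Ioo 0 T)) :=
      Measure.quasiMeasurePreserving_snd.ae hAE
    filter_upwards [hmem, hintae] with p hp hip
    obtain ⟨⟨ht0, htT⟩, hx⟩ := hp
    have hwm : Measurable (fun s' => w s' p.2) :=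
      hw.comp (measurable_id.prodMk measurable_const)
    have hu0 : 0 < T - p.1 := sub_pos.2 htT
    have habsint : IntegrableOn (fun s' => |w s' p.2|) (Ioo 0 T) :=
      mem_abs_integrable (by simp [Real.volume_Ioo])
        hwm.aestronglyMeasurable.restrict hip
    set X := (T - p.1) ^ (2 * k) * Real.exp ((4/T) ^ 4 * s * γ * d / (T - p.1) ^ 4)
      with hXdef
    have hX : 0 < X := mul_pos (Real.rpow_pos_of_pos hu0 _) (Real.exp_pos _)
    have hbb : ∀ s' ∈ Ioo (0:ℝ) T, |b p.1 s' p.2| ≤ M * X⁻¹ := by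
      intro s' hs'
      have hb1 := hbound p.1 ⟨ht0, htT⟩ s' hs' p.2 hx
      rw [abs_mul, abs_of_pos hX] at hb1
      rw [← div_eq_mul_inv, le_div_iff₀ hX, mul_comm]
      exact hb1
    have hsub : Ioc 0 p.1 ⊆ Ioo 0 T := fun y hy => ⟨hy.1, lt_of_le_of_lt hy.2 htT⟩
    have hMX : 0 ≤ M * X⁻¹ := mul_nonneg hM0 (inv_nonneg.2 hX.le)
    have hFle : |∫ s' in (0:ℝ)..p.1, b p.1 s' p.2 * w s' p.2|
        ≤ M * X⁻¹ * ∫ s' in Ioo 0 T, |w s' p.2| := by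
      rw [intervalIntegral.integral_of_le ht0.le]
      have hgint : IntegrableOn (fun s' => M * X⁻¹ * |w s' p.2|) (Ioc 0 p.1) :=
        (habsint.mono_set hsub).const_mul _
      have hb2 : ∀ᵐ s' ∂(volume.restrict (Ioc 0 p.1)),
          ‖b p.1 s' p.2 * w s' p.2‖ ≤ M * X⁻¹ * |w s' p.2| := by
        filter_upwards [ae_restrict_mem measurableSet_Ioc] with s' hs'
        rw [Real.norm_eq_abs, abs_mul]
        exact mul_le_mul_of_nonneg_right (hbb s' (hsub hs')) (abs_nonneg _)
      calc |∫ s' in Ioc 0 p.1, b p.1 s' p.2 * w s' p.2|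
          ≤ ∫ s' in Ioc 0 p.1, M * X⁻¹ * |w s' p.2| := by
            simpa [Real.norm_eq_abs] using norm_integral_le_of_norm_le hgint hb2
        _ = M * X⁻¹ * ∫ s' in Ioc 0 p.1, |w s' p.2| := integral_const_mul _ _
        _ ≤ M * X⁻¹ * ∫ s' in Ioo 0 T, |w s' p.2| := by
            refine mul_le_mul_of_nonneg_left ?_ hMX
            exact setIntegral_mono_set habsint (ae_of_all _ fun y => abs_nonneg _)
              (HasSubset.Subset.eventuallyLE hsub)
    have hCS := sq_setIntegral_abs_le hT.le hwm.aestronglyMeasurable.restrict hip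
    have hF2 : (∫ s' in (0:ℝ)..p.1, b p.1 s' p.2 * w s' p.2) ^ 2
        ≤ (M * X⁻¹) ^ 2 * (T * ∫ s' in Ioo 0 T, w s' p.2 ^ 2) := by
      rw [← sq_abs]
      calc |∫ s' in (0:ℝ)..p.1, b p.1 s' p.2 * w s' p.2| ^ 2
          ≤ (M * X⁻¹ * ∫ s' in Ioo 0 T, |w s' p.2|) ^ 2 :=
            pow_le_pow_left₀ (abs_nonneg _) hFle 2
        _ = (M * X⁻¹) ^ 2 * (∫ s' in Ioo 0 T, |w s' p.2|) ^ 2 := mul_pow _ _ _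
        _ ≤ (M * X⁻¹) ^ 2 * (T * ∫ s' in Ioo 0 T, w s' p.2 ^ 2) :=
            mul_le_mul_of_nonneg_left hCS (sq_nonneg _)
    have hwk := weight_key hT hs hγ hd hk ht0 htT β hβ
    rw [← hXdef] at hwk
    have hsplit : (s * β p.1) ^ (-k) = s ^ (-k) * β p.1 ^ (-k) :=
      Real.mul_rpow hs.le (hβ0 p.1)
    have hβe : 0 ≤ β p.1 ^ (-k) * Real.exp (2 * s * γ * d * β p.1) :=
      mul_nonneg (Real.rpow_nonneg (hβ0 p.1) _) (Real.exp_pos _).le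
    have hV0 : 0 ≤ ∫ s' in Ioo 0 T, w s' p.2 ^ 2 := hh0 p.2
    calc (s * β p.1) ^ (-k) * Real.exp (2 * s * γ * d * β p.1)
          * (∫ s' in (0:ℝ)..p.1, b p.1 s' p.2 * w s' p.2) ^ 2
        = s ^ (-k) * (β p.1 ^ (-k) * Real.exp (2 * s * γ * d * β p.1)
            * (∫ s' in (0:ℝ)..p.1, b p.1 s' p.2 * w s' p.2) ^ 2) := by
          rw [hsplit]; ring
      _ ≤ s ^ (-k) * (β p.1 ^ (-k) * Real.exp (2 * s * γ * d * β p.1)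
            * ((M * X⁻¹) ^ 2 * (T * ∫ s' in Ioo 0 T, w s' p.2 ^ 2))) := by
          refine mul_le_mul_of_nonneg_left
            (mul_le_mul_of_nonneg_left hF2 hβe) (Real.rpow_nonneg hs.le _)
      _ = s ^ (-k) * ((M ^ 2 * T * ∫ s' in Ioo 0 T, w s' p.2 ^ 2)
            * (β p.1 ^ (-k) * Real.exp (2 * s * γ * d * β p.1) * (X⁻¹) ^ 2)) := by
          ring
      _ ≤ s ^ (-k) * ((M ^ 2 * T * ∫ s' in Ioo 0 T, w s' p.2 ^ 2)
            * ((T ^ 4)⁻¹) ^ (-k)) := by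
          refine mul_le_mul_of_nonneg_left
            (mul_le_mul_of_nonneg_left hwk ?_) (Real.rpow_nonneg hs.le _)
          exact mul_nonneg (mul_nonneg (sq_nonneg _) hT.le) hV0
      _ = K0 * ∫ s' in Ioo 0 T, w s' p.2 ^ 2 := by rw [hK0]; ring
  have step2 : (∫ p in (Ioo 0 T) ×ˢ (Ioo (0:ℝ) 1),
        K0 * ∫ s' in Ioo 0 T, w s' p.2 ^ 2)
      = K0 * T * ∫ x in Ioo (0:ℝ) 1, ∫ s' in Ioo 0 T, w s' x ^ 2 := by
    rw [show (∫ p in (Ioo 0 T) ×ˢ (Ioo (0:ℝ) 1), K0 * ∫ s' in Ioo 0 T, w s' p.2 ^ 2)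
        = ∫ p, (fun _ : ℝ => K0) p.1 * (fun x => ∫ s' in Ioo 0 T, w s' x ^ 2) p.2
            ∂((volume.restrict (Ioo 0 T)).prod (volume.restrict (Ioo (0:ℝ) 1)))
          from by rw [← hmeq]]
    rw [MeasureTheory.integral_prod_mul (L := ℝ) (μ := volume.restrict (Ioo 0 T))
      (ν := volume.restrict (Ioo (0:ℝ) 1)) (fun _ : ℝ => K0)
      (fun x => ∫ s' in Ioo 0 T, w s' x ^ 2)]
    have : ∫ _ in Ioo (0:ℝ) T, K0 = T * K0 := by
      simp [Real.volume_Ioo, ENNReal.toReal_ofReal hT.le, hT.le]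
    rw [this]; ring
  calc (∫ p in (Ioo 0 T) ×ˢ (Ioo (0:ℝ) 1),
        (s * β p.1) ^ (-k) * Real.exp (2 * s * γ * d * β p.1)
          * (∫ s' in (0:ℝ)..p.1, b p.1 s' p.2 * w s' p.2) ^ 2)
      ≤ ∫ p in (Ioo 0 T) ×ˢ (Ioo (0:ℝ) 1), K0 * ∫ s' in Ioo 0 T, w s' p.2 ^ 2 := step1
    _ = K0 * T * ∫ x in Ioo (0:ℝ) 1, ∫ s' in Ioo 0 T, w s' x ^ 2 := step2
    _ = ((T ^ 4)⁻¹) ^ (-k) * T ^ 2 * M ^ 2 * s ^ (-k)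
          * ∫ p in (Ioo 0 T) ×ˢ (Ioo (0:ℝ) 1), w p.1 p.2 ^ 2 := by
        rw [hFub, hK0]; ring
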